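/- Any proper binary factorisation (x, y) of a string of O₂ of length greater than 2 with both x and y short admits a balanced decomposition: there exist factorisations x = x₁x₂ and y = y₁y₂ (with at most one of x₂, y₂ possibly empty but x₁, y₁ nonempty) such that the factors can be partitioned into two groups, each nonempty and each concatenating to a balanced string of length strictly less than |xy|. -/

import Mathlib

/-- A letter of the alphabet Σₙ: the `i`-th pair, with `true` for `aᵢ`
and `false` for its conjugate `āᵢ`. -/
abbrev Letter (n : ℕ) := Fin n × Bool

/-- A string (word) over Σₙ. -/
abbrev Word (n : ℕ) := List (Letter n)

/-- The conjugate letter. -/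
def conj {n : ℕ} (x : Letter n) : Letter n := (x.1, !x.2)

/-- The balance map μ : Σₙ* → ℤⁿ. -/
def mu {n : ℕ} (w : Word n) : Fin n → ℤ :=
  fun i => (w.count ((i, true) : Letter n) : ℤ) - (w.count ((i, false) : Letter n) : ℤ)

/-- The n-balanced language Oₙ. -/
def OO (n : ℕ) : Set (Word n) :=
  {w | ∀ i : Fin n, w.count ((i, true) : Letter n) = w.count ((i, false) : Letter n)}

/-- A string is short if no conjugate pair of letters both occur in it. -/
def Short {n : ℕ} (w : Word n) : Prop :=
  ∀ i : Fin n, ¬ (((i, true) : Letter n) ∈ w ∧ ((i, false) : Letter n) ∈ w)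

/-- The factor of `p` with indices from `i` to `j` (inclusive). -/
def factor {n : ℕ} (p : Word n) (i j : ℕ) : Word n :=
  (p.drop i).take (j + 1 - i)

/-- `[i, j]` is a bump of `p`: the factor `p[i..j]` is a minimal non-short factor,
i.e. it is not short but all of its ultra-proper factors are short. -/
def IsBump {n : ℕ} (p : Word n) (i j : ℕ) : Prop :=
  i < j ∧ j < p.length ∧ ¬ Short (factor p i j) ∧
    ∀ u l r : Word n, factor p i j = l ++ u ++ r → u ≠ [] → u ≠ factor p i j → Short u

/-- Bal-decomposition of a pair `(z₀, z₁)`: choose proper factorisations of `z₀` and `z₁`,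
and partition all resulting factors into two nonempty lists of length at most 2, each
concatenating to a string of O₂ of length strictly less than `|z₀z₁|`. -/
def BalDecomp (z₀ z₁ : Word 2) : Prop :=
  ∃ f₀ f₁ P Q : List (Word 2),
    f₀.flatten = z₀ ∧ [] ∉ f₀ ∧ f₁.flatten = z₁ ∧ [] ∉ f₁ ∧
    (P ++ Q).Perm (f₀ ++ f₁) ∧
    0 < P.length ∧ P.length ≤ 2 ∧ 0 < Q.length ∧ Q.length ≤ 2 ∧
    P.flatten.length < z₀.length + z₁.length ∧ Q.flatten.length < z₀.length + z₁.length ∧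
    P.flatten ∈ OO 2 ∧ Q.flatten ∈ OO 2

lemma conj_conj (l : Letter 2) : conj (conj l) = l := by simp [conj]
lemma conj_fst (l : Letter 2) : (conj l).1 = l.1 := rfl
lemma conj_ne (l : Letter 2) : conj l ≠ l := by
  obtain ⟨i, b⟩ := l; simp [conj]
lemma eq_or_conj (l m : Letter 2) (h : l.1 = m.1) : l = m ∨ l = conj m := by
  obtain ⟨a, b⟩ := l; obtain ⟨a', b'⟩ := m
  obtain rfl : a = a' := h
  cases b <;> cases b' <;> simp [conj]
lemma fin2_cover (a b i : Fin 2) (h : a ≠ b) : i = a ∨ i = b := by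
  have h' : a.val ≠ b.val := fun hh => h (Fin.ext hh)
  have := a.2; have := b.2; have := i.2
  rw [Fin.ext_iff, Fin.ext_iff]
  omega
lemma short_not_both {w : Word 2} (hw : Short w) {l : Letter 2}
    (h1 : l ∈ w) (h2 : conj l ∈ w) : False := by
  obtain ⟨i, b⟩ := l
  cases b
  · exact hw i ⟨by simpa [conj] using h2, h1⟩
  · exact hw i ⟨h1, by simpa [conj] using h2⟩

lemma len4 (w : Word 2) : w.length =
    w.count ((0, true) : Letter 2) + w.count ((0, false) : Letter 2) +
    w.count ((1, true) : Letter 2) + w.count ((1, false) : Letter 2) := by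
  induction w with
  | nil => simp
  | cons h t ih =>
    obtain ⟨i, b⟩ := h
    fin_cases i <;> cases b <;> simp [List.count_cons, ih] <;> omega

lemma count_zero_of (w : Word 2) (c d e : Letter 2) (hw : ∀ l ∈ w, l = c ∨ l = d)
    (h1 : e ≠ c) (h2 : e ≠ d) : w.count e = 0 :=
  List.count_eq_zero_of_not_mem fun h => by
    rcases hw e h with rfl | rfl
    exacts [h1 rfl, h2 rfl]

lemma count_two (c d : Letter 2) (hcd : c ≠ d) (w : Word 2)
    (hw : ∀ l ∈ w, l = c ∨ l = d) : w.count c + w.count d = w.length := by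
  induction w with
  | nil => simp
  | cons a t ih =>
    have ht : ∀ l ∈ t, l = c ∨ l = d := fun l hl => hw l (List.mem_cons_of_mem _ hl)
    have ihh := ih ht
    rcases hw a List.mem_cons_self with rfl | rfl <;>
      simp [List.count_cons, hcd, Ne.symm hcd] <;> omega

lemma OO_compl (u v w : Word 2) (hw : w ∈ OO 2) (hu : u ∈ OO 2)
    (h : ∀ l : Letter 2, u.count l + v.count l = w.count l) : v ∈ OO 2 := by
  simp only [OO, Set.mem_setOf_eq] at *
  intro i
  have h1 := h (i, true); have h2 := h (i, false)
  have h3 := hw i; have h4 := hu i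
  omega

lemma pair_bal (c : Letter 2) : ([c, conj c] : Word 2) ∈ OO 2 := by
  obtain ⟨ci, cb⟩ := c
  simp only [OO, Set.mem_setOf_eq]
  intro i
  fin_cases ci <;> fin_cases i <;> cases cb <;> decide

lemma key (c d : Letter 2) (hcd : c.1 ≠ d.1) (u v : Word 2)
    (hu : ∀ l ∈ u, l = c ∨ l = d) (hv : ∀ l ∈ v, l = conj c ∨ l = conj d)
    (hcc : u.count c = v.count (conj c)) :
    (u ++ v).count c = (u ++ v).count (conj c) := by
  have e1 : v.count c = 0 := count_zero_of v (conj c) (conj d) c hv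
    (Ne.symm (conj_ne c)) (fun h => hcd (by rw [h, conj_fst]))
  have e2 : u.count (conj c) = 0 := count_zero_of u c d (conj c) hu
    (conj_ne c) (fun h => hcd (by rw [← conj_fst c, h]))
  simp [List.count_append, e1, e2, hcc]

lemma bal_of (c d : Letter 2) (hcd : c.1 ≠ d.1) (u v : Word 2)
    (hu : ∀ l ∈ u, l = c ∨ l = d) (hv : ∀ l ∈ v, l = conj c ∨ l = conj d)
    (hlen : u.length = v.length) (hc : u.count c = v.count (conj c)) :
    u ++ v ∈ OO 2 := by
  have hcd' : c ≠ d := fun h => hcd (by rw [h])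
  have hccd : conj c ≠ conj d := fun h => hcd (by rw [← conj_fst c, h, conj_fst])
  have h2 := count_two c d hcd' u hu
  have h3 := count_two (conj c) (conj d) hccd v hv
  have hd : u.count d = v.count (conj d) := by omega
  have hu' : ∀ l ∈ u, l = d ∨ l = c := fun l hl => (hu l hl).symm
  have hv' : ∀ l ∈ v, l = conj d ∨ l = conj c := fun l hl => (hv l hl).symm
  have keyc := key c d hcd u v hu hv hc
  have keyd := key d c (Ne.symm hcd) u v hu' hv' hd
  simp only [OO, Set.mem_setOf_eq]
  intro i
  rcases fin2_cover c.1 d.1 i hcd with hi | hi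
  · rcases eq_or_conj (i, true) c (by simp [hi]) with h | h
    · have h' : ((i, false) : Letter 2) = conj c := by rw [← h]; rfl
      rw [h, h']; exact keyc
    · have h' : ((i, false) : Letter 2) = c := by
        have := congrArg conj h; rwa [conj_conj] at this  -- conj (i,true) = (i,false)
      rw [h, h']; exact keyc.symm
  · rcases eq_or_conj (i, true) d (by simp [hi]) with h | h
    · have h' : ((i, false) : Letter 2) = conj d := by rw [← h]; rfl
      rw [h, h']; exact keyd
    · have h' : ((i, false) : Letter 2) = d := by
        have := congrArg conj h; rwa [conj_conj] at this
      rw [h, h']; exact keyd.symm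

lemma ivt (A : ℕ → ℤ) (hstep : ∀ t, A t - 1 ≤ A (t + 1)) (a b : ℕ) (hab : a ≤ b)
    (ha : 0 ≤ A a) (hb : A b ≤ 0) : ∃ t, a ≤ t ∧ t ≤ b ∧ A t = 0 := by
  revert hb
  induction b, hab using Nat.le_induction with
  | base => exact fun hb => ⟨a, le_refl a, le_refl a, le_antisymm hb ha⟩
  | succ b hab ih =>
    intro hb
    by_cases hAb : A b ≤ 0
    · obtain ⟨t, h1, h2, h3⟩ := ih hAb
      exact ⟨t, h1, h2.trans (Nat.le_succ b), h3⟩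
    · push_neg at hAb
      have := hstep b
      exact ⟨b + 1, by omega, le_refl _, by omega⟩

lemma count_take_succ_bounds (l : Letter 2) (w : Word 2) (t : ℕ) :
    (w.take t).count l ≤ (w.take (t + 1)).count l ∧
      (w.take (t + 1)).count l ≤ (w.take t).count l + 1 := by
  rw [List.take_succ, List.count_append]
  have h : (w[t]?.toList).count l ≤ (w[t]?.toList).length := List.count_le_length
  have h2 : (w[t]?.toList).length ≤ 1 := by cases w[t]? <;> simp
  omega

lemma perm_count {l₁ l₂ : Word 2} (h : l₁.Perm l₂) (a : Letter 2) :
    l₁.count a = l₂.count a := by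
  induction h with
  | nil => rfl
  | cons x _ ih => simp [List.count_cons, ih]
  | swap x y l => simp [List.count_cons]; omega
  | trans _ _ ih1 ih2 => exact ih1.trans ih2

lemma core (x y x₁ x₂ y₁ y₂ p₁ p₂ q₁ q₂ : Word 2)
    (hx : x₁ ++ x₂ = x) (hy : y₁ ++ y₂ = y)
    (h1 : x₁ ≠ []) (h2 : x₂ ≠ []) (h3 : y₁ ≠ []) (h4 : y₂ ≠ [])
    (hxy : x ++ y ∈ OO 2)
    (hperm : ([p₁, p₂] ++ [q₁, q₂]).Perm ([x₁, x₂] ++ [y₁, y₂]))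
    (hP : p₁ ++ p₂ ∈ OO 2) : BalDecomp x y := by
  have hflat : (p₁ ++ p₂ ++ (q₁ ++ q₂)).Perm (x ++ y) := by
    have := hperm.flatten
    simpa [← hx, ← hy] using this
  have hcnt : ∀ l : Letter 2, (p₁ ++ p₂).count l + (q₁ ++ q₂).count l = (x ++ y).count l := by
    intro l
    have := perm_count hflat l
    simp only [List.count_append] at this ⊢
    omega
  have hQ : q₁ ++ q₂ ∈ OO 2 := OO_compl (p₁ ++ p₂) (q₁ ++ q₂) (x ++ y) hxy hP hcnt
  have hlensum : p₁.length + p₂.length + (q₁.length + q₂.length) = x.length + y.length := by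
    have := hflat.length_eq
    simp only [List.length_append] at this
    omega
  have hne : ∀ w ∈ [p₁, p₂, q₁, q₂], w ≠ [] := by
    intro w hw
    have : w ∈ [x₁, x₂, y₁, y₂] := by
      have := hperm.mem_iff.mp (by simpa using hw)
      simpa using this
    simp at this
    rcases this with rfl | rfl | rfl | rfl <;> assumption
  have np1 := hne p₁ (by simp); have np2 := hne p₂ (by simp)
  have nq1 := hne q₁ (by simp); have nq2 := hne q₂ (by simp)
  have lp1 : 0 < p₁.length := List.length_pos_iff.mpr np1
  have lp2 : 0 < p₂.length := List.length_pos_iff.mpr np2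
  have lq1 : 0 < q₁.length := List.length_pos_iff.mpr nq1
  have lq2 : 0 < q₂.length := List.length_pos_iff.mpr nq2
  refine ⟨[x₁, x₂], [y₁, y₂], [p₁, p₂], [q₁, q₂], by simpa using hx, ?_, by simpa using hy, ?_,
    hperm, by simp, by simp, by simp, by simp, ?_, ?_, by simpa using hP, by simpa using hQ⟩
  · simp only [List.mem_cons, List.not_mem_nil, or_false]
    exact not_or.mpr ⟨fun h => h1 h.symm, fun h => h2 h.symm⟩
  · simp only [List.mem_cons, List.not_mem_nil, or_false]
    exact not_or.mpr ⟨fun h => h3 h.symm, fun h => h4 h.symm⟩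
  · simp only [List.flatten_cons, List.flatten_nil, List.append_nil, List.length_append]
    omega
  · simp only [List.flatten_cons, List.flatten_nil, List.append_nil, List.length_append]
    omega

theorem stmt_12 (x y : Word 2) (hx : x ≠ []) (hy : y ≠ [])
    (hbal : x ++ y ∈ OO 2) (hlen : 2 < (x ++ y).length)
    (hsx : Short x) (hsy : Short y) :
    BalDecomp x y := by
  have hbal' : ∀ i : Fin 2, (x ++ y).count ((i, true) : Letter 2)
      = (x ++ y).count ((i, false) : Letter 2) := hbal
  have hcnt : ∀ i : Fin 2, x.count ((i, true) : Letter 2) = y.count ((i, false) : Letter 2) ∧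
      x.count ((i, false) : Letter 2) = y.count ((i, true) : Letter 2) := by
    intro i
    have hb := hbal' i
    simp only [List.count_append] at hb
    have hxs := hsx i; have hys := hsy i
    rw [not_and_or] at hxs hys
    have c1 : x.count ((i, true) : Letter 2) = 0 ∨ x.count ((i, false) : Letter 2) = 0 := by
      rcases hxs with h | h
      exacts [Or.inl (List.count_eq_zero_of_not_mem h), Or.inr (List.count_eq_zero_of_not_mem h)]
    have c2 : y.count ((i, true) : Letter 2) = 0 ∨ y.count ((i, false) : Letter 2) = 0 := by
      rcases hys with h | h
      exacts [Or.inl (List.count_eq_zero_of_not_mem h), Or.inr (List.count_eq_zero_of_not_mem h)]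
    rcases c1 with h1 | h1 <;> rcases c2 with h2 | h2 <;> omega
  have hconj : ∀ l : Letter 2, x.count l = y.count (conj l) := by
    rintro ⟨i, b⟩
    cases b
    · simpa [conj] using (hcnt i).2
    · simpa [conj] using (hcnt i).1
  have hconj' : ∀ l : Letter 2, y.count l = x.count (conj l) := by
    rintro ⟨i, b⟩
    cases b
    · simpa [conj] using (hcnt i).1.symm
    · simpa [conj] using (hcnt i).2.symm
  have hLM : x.length = y.length := by
    have h0 := hcnt 0; have h1 := hcnt 1
    rw [len4 x, len4 y]
    omega
  have hL2 : 2 ≤ x.length := by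
    rw [List.length_append] at hlen
    omega
  have hM2 : 2 ≤ y.length := by omega
  have memx : ∀ l : Letter 2, l ∈ x → conj l ∈ y := by
    intro l hl
    have h : 0 < x.count l := List.count_pos_iff.mpr hl
    rw [hconj l] at h
    exact List.count_pos_iff.mp h
  have memy : ∀ l : Letter 2, l ∈ y → conj l ∈ x := by
    intro l hl
    have h : 0 < y.count l := List.count_pos_iff.mpr hl
    rw [hconj' l] at h
    exact List.count_pos_iff.mp h
  obtain ⟨c, xt, rfl⟩ := List.exists_cons_of_ne_nil hx
  obtain ⟨e, yt, rfl⟩ := List.exists_cons_of_ne_nil hy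
  have hxt : xt ≠ [] := by
    rintro rfl
    simp only [List.length_cons, List.length_nil] at hL2
    omega
  have hyt : yt ≠ [] := by
    rintro rfl
    simp only [List.length_cons, List.length_nil] at hM2
    omega
  have hcmem : c ∈ c :: xt := List.mem_cons_self
  have hemem : e ∈ e :: yt := List.mem_cons_self
  by_cases hA : e = conj c
  · -- case A: pair head of x with head of y
    subst hA
    exact core (c :: xt) (conj c :: yt) [c] xt [conj c] yt [c] [conj c] xt yt rfl rfl
      (by simp) hxt (by simp) hyt hbal
      (List.Perm.cons _ (List.Perm.swap _ _ _)) (pair_bal c)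
  by_cases hB : (e :: yt).getLast (List.cons_ne_nil e yt) = conj c
  · -- case B: pair head of x with last of y
    have hysplit : (e :: yt).dropLast ++ [conj c] = e :: yt := by
      rw [← hB]; exact List.dropLast_append_getLast _
    have hdLy : (e :: yt).dropLast ≠ [] := by
      apply List.ne_nil_of_length_pos
      rw [List.length_dropLast]
      simp only [List.length_cons]
      have := List.length_pos_iff.mpr hyt
      omega
    exact core (c :: xt) (e :: yt) [c] xt ((e :: yt).dropLast) [conj c]
      [c] [conj c] xt ((e :: yt).dropLast) rfl hysplit
      (by simp) hxt hdLy (by simp) hbal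
      (List.Perm.cons _ ((List.Perm.swap _ _ _).trans
        (List.Perm.cons _ (List.Perm.swap _ _ _)))) (pair_bal c)
  by_cases hB' : (c :: xt).getLast (List.cons_ne_nil c xt) = conj e
  · -- case B': pair last of x with head of y
    have hxsplit : (c :: xt).dropLast ++ [conj e] = c :: xt := by
      rw [← hB']; exact List.dropLast_append_getLast _
    have hdLx : (c :: xt).dropLast ≠ [] := by
      apply List.ne_nil_of_length_pos
      rw [List.length_dropLast]
      simp only [List.length_cons]
      have := List.length_pos_iff.mpr hxt
      omega
    exact core (c :: xt) (e :: yt) ((c :: xt).dropLast) [conj e] [e] yt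
      [conj e] [e] ((c :: xt).dropLast) yt hxsplit rfl
      hdLx (by simp) (by simp) hyt hbal
      ((List.Perm.cons _ (List.Perm.swap _ _ _)).trans (List.Perm.swap _ _ _))
      (by simpa [conj_conj] using pair_bal (conj e))
  -- case C
  have hd : conj e ∈ c :: xt := memy e hemem
  have hdc : (conj e).1 ≠ c.1 := by
    intro h
    rcases eq_or_conj (conj e) c h with h' | h'
    · exact hA (by rw [← conj_conj e, h'])
    · have hec : e = c := by
        have h2 := congrArg conj h'
        rw [conj_conj, conj_conj] at h2
        exact h2
      subst hec
      exact short_not_both hsx hcmem (memy e hemem)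
  have hx_sub : ∀ l ∈ c :: xt, l = c ∨ l = conj e := by
    intro l hl
    rcases fin2_cover c.1 (conj e).1 l.1 (Ne.symm hdc) with h | h
    · rcases eq_or_conj l c h with h' | h'
      · exact Or.inl h'
      · subst h'
        exact (short_not_both hsx hcmem hl).elim
    · rcases eq_or_conj l (conj e) h with h' | h'
      · exact Or.inr h'
      · subst h'
        rw [conj_conj] at hl
        exact (short_not_both hsy hemem (memx e hl)).elim
  have hy_sub : ∀ l ∈ e :: yt, l = conj c ∨ l = conj (conj e) := by
    intro l hl
    rcases fin2_cover c.1 (conj e).1 l.1 (Ne.symm hdc) with h | h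
    · rcases eq_or_conj l c h with h' | h'
      · subst h'
        exact (short_not_both hsx hcmem (memy l hl)).elim
      · exact Or.inl h'
    · rcases eq_or_conj l (conj e) h with h' | h'
      · subst h'
        exact (short_not_both hsy hl (by rw [conj_conj]; exact hemem)).elim
      · exact Or.inr h'
  rw [conj_conj] at hy_sub
  have hgx : (c :: xt).getLast (List.cons_ne_nil c xt) = c := by
    rcases hx_sub _ (List.getLast_mem (List.cons_ne_nil c xt)) with h | h
    · exact h
    · exact absurd h hB'
  have hgy : (e :: yt).getLast (List.cons_ne_nil e yt) = e := by
    rcases hy_sub _ (List.getLast_mem (List.cons_ne_nil e yt)) with h | h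
    · exact absurd h hB
    · exact h
  have hxsplit : (c :: xt).dropLast ++ [c] = c :: xt := by
    have h := List.dropLast_append_getLast (List.cons_ne_nil c xt)
    rwa [hgx] at h
  have hysplit : (e :: yt).dropLast ++ [e] = e :: yt := by
    have h := List.dropLast_append_getLast (List.cons_ne_nil e yt)
    rwa [hgy] at h
  have hce : conj c ≠ e := fun h => hA h.symm
  set A : ℕ → ℤ := fun t =>
    (((c :: xt).take t).count c : ℤ) - (((e :: yt).take t).count (conj c) : ℤ) with hAdef
  have hstep : ∀ t, A t - 1 ≤ A (t + 1) := by
    intro t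
    have h1 := count_take_succ_bounds c (c :: xt) t
    have h2 := count_take_succ_bounds (conj c) (e :: yt) t
    simp only [hAdef]
    omega
  have hA1 : A 1 = 1 := by
    have e1 : (c :: xt).take 1 = [c] := rfl
    have e2 : (e :: yt).take 1 = [e] := rfl
    simp only [hAdef, e1, e2]
    have hz : ([e] : Word 2).count (conj c) = 0 :=
      List.count_eq_zero_of_not_mem (by simpa using hce)
    have ho : ([c] : Word 2).count c = 1 := by simp
    rw [hz, ho]
    norm_num
  have hc_x : (c :: xt).count c = (c :: xt).dropLast.count c + 1 := by
    conv_lhs => rw [← hxsplit]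
    simp [List.count_append]
  have hc_y : (e :: yt).count (conj c) = (e :: yt).dropLast.count (conj c) := by
    conv_lhs => rw [← hysplit]
    simp [List.count_append, List.count_cons, hce, hce.symm]
  have htake_x : (c :: xt).take ((c :: xt).length - 1) = (c :: xt).dropLast :=
    List.dropLast_eq_take.symm
  have htake_y : (e :: yt).take ((c :: xt).length - 1) = (e :: yt).dropLast := by
    rw [hLM]
    exact List.dropLast_eq_take.symm
  have hALm : A ((c :: xt).length - 1) = -1 := by
    simp only [hAdef, htake_x, htake_y]
    have := hconj c
    omega
  obtain ⟨t, ht1, ht2, ht3⟩ := ivt A hstep 1 ((c :: xt).length - 1)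
    (by omega) (by rw [hA1]; norm_num) (by rw [hALm]; norm_num)
  have htx : (c :: xt).take t ≠ [] := by
    apply List.ne_nil_of_length_pos
    rw [List.length_take]
    omega
  have hdx' : (c :: xt).drop t ≠ [] := by
    apply List.ne_nil_of_length_pos
    rw [List.length_drop]
    omega
  have hty : (e :: yt).take t ≠ [] := by
    apply List.ne_nil_of_length_pos
    rw [List.length_take]
    omega
  have hdy' : (e :: yt).drop t ≠ [] := by
    apply List.ne_nil_of_length_pos
    rw [List.length_drop]
    omega
  have hP : (c :: xt).take t ++ (e :: yt).take t ∈ OO 2 := by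
    apply bal_of c (conj e) hdc.symm
    · exact fun l hl => hx_sub l (List.mem_of_mem_take hl)
    · exact fun l hl => (hy_sub l (List.mem_of_mem_take hl)).imp id
        (fun h => by rw [conj_conj]; exact h)
    · rw [List.length_take, List.length_take, hLM]
    · simp only [hAdef] at ht3
      omega
  exact core (c :: xt) (e :: yt) ((c :: xt).take t) ((c :: xt).drop t)
    ((e :: yt).take t) ((e :: yt).drop t)
    ((c :: xt).take t) ((e :: yt).take t) ((c :: xt).drop t) ((e :: yt).drop t)
    (List.take_append_drop t _) (List.take_append_drop t _)
    htx hdx' hty hdy' hbal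
    (List.Perm.cons _ (List.Perm.swap _ _ _)) hP
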